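/- Let φ(x) = sup_{w ∈ U}[⟨x,w⟩ − ½⟨w,Bw⟩] with U nonempty closed convex containing 0 and B positive semidefinite. Then dom φ = cone(U°) + Ran(B) and the horizon cone hzn(φ) = (cone U)°. In particular, φ is coercive if and only if 0 ∈ int U. -/

import Mathlib

open scoped Pointwise
noncomputable section

abbrev En (n : ℕ) := EuclideanSpace ℝ (Fin n)

/-- Fenchel conjugate. -/
def econj {n : ℕ} (h : En n → EReal) (y : En n) : EReal :=
  ⨆ x : En n, (((inner ℝ y x : ℝ)) : EReal) - h x

/-- Horizon (recession) function. -/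
def ehorizon {n : ℕ} (h : En n → EReal) (z : En n) : EReal :=
  ⨆ x ∈ {x : En n | h x ≠ ⊤}, (h (x + z) - h x)

/-- Closed perspective function. -/
def epersp {n : ℕ} (h : En n → EReal) (p : En n × ℝ) : EReal :=
  if 0 < p.2 then ((p.2 : ℝ) : EReal) * h (p.2⁻¹ • p.1)
  else if p.2 = 0 then ehorizon h p.1 else ⊤

/-- Support function of a set. -/
def esupp {n : ℕ} (C : Set (En n)) (y : En n) : EReal :=
  ⨆ x ∈ C, (((inner ℝ y x : ℝ)) : EReal)

/-- A proper function: somewhere finite and never `-∞`. -/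
def IsProperFn {n : ℕ} (h : En n → EReal) : Prop := (∃ x, h x ≠ ⊤) ∧ ∀ x, h x ≠ ⊥

/-- Convexity of an extended-real-valued function, via convexity of its epigraph. -/
def IsConvexFn {n : ℕ} (h : En n → EReal) : Prop :=
  Convex ℝ {p : En n × ℝ | h p.1 ≤ (p.2 : EReal)}

/-- Quadratic support function `φ(x) = sup_{w ∈ U} [⟨x,w⟩ − ½⟨w,Bw⟩]`. -/
def qsFn {n : ℕ} (U : Set (En n)) (B : En n →L[ℝ] En n) (x : En n) : EReal :=
  ⨆ w ∈ U, (((inner ℝ x w : ℝ) - (1 / 2) * (inner ℝ w (B w) : ℝ) : ℝ) : EReal)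

/-- Polar set. -/
def epolarSet {n : ℕ} (U : Set (En n)) : Set (En n) :=
  {v | ∀ u ∈ U, (inner ℝ v u : ℝ) ≤ 1}

/-- Cone generated by a set: `{λu : λ ≥ 0, u ∈ C}`. -/
def econeGen {n : ℕ} (C : Set (En n)) : Set (En n) :=
  {x | ∃ lam : ℝ, 0 ≤ lam ∧ ∃ u ∈ C, x = lam • u}

/-- Polar cone. -/
def epolarCone {n : ℕ} (K : Set (En n)) : Set (En n) :=
  {v | ∀ x ∈ K, (inner ℝ v x : ℝ) ≤ 0}

open Filter Metric Set Bornology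

section helpers
variable {n : ℕ} {U : Set (En n)} {B : En n →L[ℝ] En n}

lemma le_qsFn {x w : En n} (hw : w ∈ U) :
    (((inner ℝ x w : ℝ) - (1 / 2) * (inner ℝ w (B w) : ℝ) : ℝ) : EReal) ≤ qsFn U B x :=
  le_iSup₂ (f := fun w (_ : w ∈ U) =>
    (((inner ℝ x w : ℝ) - (1 / 2) * (inner ℝ w (B w) : ℝ) : ℝ) : EReal)) w hw

lemma qsFn_le {x : En n} {M : ℝ}
    (h : ∀ w ∈ U, (inner ℝ x w : ℝ) - (1 / 2) * (inner ℝ w (B w) : ℝ) ≤ M) :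
    qsFn U B x ≤ (M : EReal) :=
  iSup₂_le fun w hw => EReal.coe_le_coe_iff.2 (h w hw)

lemma qsFn_nonneg (hU0 : (0 : En n) ∈ U) (x : En n) : (0 : EReal) ≤ qsFn U B x := by
  have h := le_qsFn (B := B) (x := x) hU0
  simpa using h

lemma qsFn_zero (hU0 : (0 : En n) ∈ U)
    (hpsd : ∀ x : En n, 0 ≤ (inner ℝ x (B x) : ℝ)) : qsFn U B 0 = 0 := by
  refine le_antisymm ?_ (qsFn_nonneg hU0 0)
  have : qsFn U B 0 ≤ ((0 : ℝ) : EReal) := qsFn_le fun w hw => by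
    have := hpsd w
    simp only [inner_zero_left]
    linarith
  simpa using this

lemma qsFn_bound_of_ne_top (hU0 : (0 : En n) ∈ U) {x : En n} (hx : qsFn U B x ≠ ⊤) :
    ∃ M : ℝ, ∀ w ∈ U, (inner ℝ x w : ℝ) - (1 / 2) * (inner ℝ w (B w) : ℝ) ≤ M := by
  refine ⟨(qsFn U B x).toReal, fun w hw => ?_⟩
  have h1 : (((inner ℝ x w : ℝ) - (1 / 2) * (inner ℝ w (B w) : ℝ) : ℝ) : EReal) ≤ qsFn U B x :=
    le_qsFn hw
  have hbot : qsFn U B x ≠ ⊥ := ne_of_gt (lt_of_lt_of_le (by simp) (qsFn_nonneg hU0 x))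
  rw [← EReal.coe_toReal hx hbot] at h1
  exact EReal.coe_le_coe_iff.1 h1

end helpers



section alg
variable {n : ℕ} {U : Set (En n)} {B : En n →L[ℝ] En n}
variable (hsymm : ∀ x y : En n, (inner ℝ (B x) y : ℝ) = (inner ℝ x (B y) : ℝ))
variable (hpsd : ∀ x : En n, 0 ≤ (inner ℝ x (B x) : ℝ))

include hsymm in
lemma inner_comm' (z w : En n) : (inner ℝ z (B w) : ℝ) = (inner ℝ w (B z) : ℝ) := by
  rw [← hsymm z w, real_inner_comm]

include hsymm hpsd in
lemma inner_B_cauchy (z w : En n) :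
    (inner ℝ z (B w) : ℝ) ≤ (1 / 2) * (inner ℝ z (B z) : ℝ) + (1 / 2) * (inner ℝ w (B w) : ℝ) := by
  have h := hpsd (z - w)
  have hexp : (inner ℝ (z - w) (B (z - w)) : ℝ)
      = (inner ℝ z (B z) : ℝ) - 2 * (inner ℝ z (B w) : ℝ) + (inner ℝ w (B w) : ℝ) := by
    rw [map_sub]
    simp only [inner_sub_left, inner_sub_right]
    rw [inner_comm' hsymm w z]
    ring
  linarith [hexp ▸ h]

include hsymm in
lemma q_expand (w v : En n) (a b : ℝ) :
    (inner ℝ (a • w + b • v) (B (a • w + b • v)) : ℝ)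
      = a ^ 2 * (inner ℝ w (B w) : ℝ) + 2 * a * b * (inner ℝ w (B v) : ℝ)
        + b ^ 2 * (inner ℝ v (B v) : ℝ) := by
  rw [map_add, map_smul, map_smul]
  simp only [inner_add_left, inner_add_right, real_inner_smul_left, real_inner_smul_right]
  rw [inner_comm' hsymm v w]
  ring

include hsymm hpsd in
lemma q_convex (w v : En n) {a b : ℝ} (ha : 0 ≤ a) (hb : 0 ≤ b) (hab : a + b = 1) :
    (inner ℝ (a • w + b • v) (B (a • w + b • v)) : ℝ)
      ≤ a * (inner ℝ w (B w) : ℝ) + b * (inner ℝ v (B v) : ℝ) := by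
  rw [q_expand hsymm]
  have hc := inner_B_cauchy hsymm hpsd w v
  have h1 : a * b * (2 * (inner ℝ w (B v) : ℝ))
      ≤ a * b * ((inner ℝ w (B w) : ℝ) + (inner ℝ v (B v) : ℝ)) := by
    have := mul_nonneg ha hb
    nlinarith [hc, this]
  have hb' : b = 1 - a := by linarith
  subst hb'
  nlinarith [h1]

include hsymm in
lemma mem_range_of_ker_orth {c : En n}
    (hc : ∀ w : En n, B w = 0 → (inner ℝ c w : ℝ) = 0) : ∃ z, B z = c := by
  classical
  set Bl := (B : En n →ₗ[ℝ] En n) with hBl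
  have hle : LinearMap.range Bl ≤ (LinearMap.ker Bl)ᗮ := by
    rintro _ ⟨z, rfl⟩
    intro u hu
    have hu' : B u = 0 := hu
    have : (inner ℝ (B u) z : ℝ) = (inner ℝ u (B z) : ℝ) := hsymm u z
    rw [hu'] at this
    exact (by simpa using this.symm : (inner ℝ u (B z) : ℝ) = 0)
  have heq : LinearMap.range Bl = (LinearMap.ker Bl)ᗮ := by
    apply Submodule.eq_of_le_of_finrank_le hle
    have h1 : Module.finrank ℝ (LinearMap.ker Bl)
        + Module.finrank ℝ ((LinearMap.ker Bl)ᗮ) = Module.finrank ℝ (En n) :=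
      Submodule.finrank_add_finrank_orthogonal _
    have h2 : Module.finrank ℝ (LinearMap.range Bl)
        + Module.finrank ℝ (LinearMap.ker Bl) = Module.finrank ℝ (En n) :=
      LinearMap.finrank_range_add_finrank_ker Bl
    omega
  have hcmem : c ∈ (LinearMap.ker Bl)ᗮ := by
    intro u hu
    have : (inner ℝ c u : ℝ) = 0 := hc u hu
    rwa [real_inner_comm] at this
  rw [← heq] at hcmem
  obtain ⟨z, hz⟩ := hcmem
  exact ⟨z, hz⟩

include hsymm in
lemma mem_range_of_quad_bound {c : En n} {M : ℝ}
    (h : ∀ w : En n, (inner ℝ c w : ℝ) ≤ M + (1 / 2) * (inner ℝ w (B w) : ℝ)) :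
    ∃ z, B z = c := by
  apply mem_range_of_ker_orth hsymm
  intro w hw
  by_contra hne
  have key : ∀ t : ℝ, t * (inner ℝ c w : ℝ) ≤ M := by
    intro t
    have := h (t • w)
    rw [real_inner_smul_right] at this
    have hq : (inner ℝ (t • w) (B (t • w)) : ℝ) = 0 := by
      rw [map_smul]
      simp [real_inner_smul_left, real_inner_smul_right, hw]
    rw [hq] at this
    linarith
  rcases lt_or_gt_of_ne hne with hlt | hgt
  · have := key ((M + 1) / (inner ℝ c w : ℝ))
    rw [div_mul_cancel₀ _ hne] at this
    linarith
  · have := key ((M + 1) / (inner ℝ c w : ℝ))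
    rw [div_mul_cancel₀ _ hne] at this
    linarith

lemma mem_coneGen_polar_of_bdd {v : En n} {m : ℝ}
    (h : ∀ u ∈ U, (inner ℝ v u : ℝ) ≤ m) : v ∈ econeGen (epolarSet U) := by
  set lam : ℝ := max m 1 with hlam
  have hlam1 : (1 : ℝ) ≤ lam := le_max_right _ _
  have hlampos : 0 < lam := lt_of_lt_of_le one_pos hlam1
  refine ⟨lam, hlampos.le, lam⁻¹ • v, fun u hu => ?_, ?_⟩
  · rw [real_inner_smul_left]
    have h1 : (inner ℝ v u : ℝ) ≤ lam := le_trans (h u hu) (le_max_left _ _)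
    calc lam⁻¹ * (inner ℝ v u : ℝ) ≤ lam⁻¹ * lam :=
          mul_le_mul_of_nonneg_left h1 (inv_nonneg.2 hlampos.le)
      _ = 1 := inv_mul_cancel₀ hlampos.ne'
  · rw [smul_smul, mul_inv_cancel₀ hlampos.ne', one_smul]

lemma coneGen_smul {C : Set (En n)} {v : En n} {t : ℝ} (ht : 0 ≤ t)
    (hv : v ∈ econeGen C) : t • v ∈ econeGen C := by
  obtain ⟨lam, hlam, u, hu, rfl⟩ := hv
  exact ⟨t * lam, mul_nonneg ht hlam, u, hu, smul_smul t lam u⟩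

end alg



section sep
variable {n : ℕ} {x : En n} {u : ℝ}

-- decomposition of a functional on a product
lemma prod_funct_decomp (f : (En n × ℝ) →L[ℝ] ℝ) (w : En n) (t : ℝ) :
    f (w, t) = f (w, 0) + t * f (0, 1) := by
  have h : (w, t) = (w, (0:ℝ)) + t • ((0 : En n), (1:ℝ)) := by
    simp [Prod.ext_iff]
  rw [h, map_add, map_smul, smul_eq_mul]

-- a linear functional bounded above is zero
lemma funct_zero (g : En n →L[ℝ] ℝ) (u : ℝ) (hu : 0 < u) (h : ∀ w, g w < u) :
    ∀ w, g w = 0 := by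
  intro w
  by_contra hne
  have h2 : ∀ r : ℝ, r * g w < u := fun r => by
    have := h (r • w); rwa [map_smul, smul_eq_mul] at this
  have := h2 (2 * u / g w)
  rw [div_mul_cancel₀ _ hne] at this
  linarith

end sep
section part1
open Filter Metric Set Bornology
variable {n : ℕ} {U : Set (En n)} {B : En n →L[ℝ] En n}

lemma strict_combo {h1 h2 t1 t2 a b : ℝ} (H1 : h1 < t1) (H2 : h2 < t2)
    (ha : 0 ≤ a) (hb : 0 ≤ b) (hab : a + b = 1) :
    a * h1 + b * h2 < a * t1 + b * t2 := by
  rcases eq_or_lt_of_le ha with rfl | ha'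
  · have hb1 : b = 1 := by linarith
    subst hb1; simpa using H2
  · have e1 : a * h1 < a * t1 := mul_lt_mul_of_pos_left H1 ha'
    have e2 : b * h2 ≤ b * t2 := mul_le_mul_of_nonneg_left H2.le hb
    linarith

lemma part1_subset (hUcv : Convex ℝ U) (hU0 : (0 : En n) ∈ U)
    (hsymm : ∀ x y : En n, (inner ℝ (B x) y : ℝ) = (inner ℝ x (B y) : ℝ))
    (hpsd : ∀ x : En n, 0 ≤ (inner ℝ x (B x) : ℝ))
    {x : En n} (hx : qsFn U B x ≠ ⊤) :
    x ∈ econeGen (epolarSet U) + Set.range B := by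
  classical
  obtain ⟨M, hM⟩ := qsFn_bound_of_ne_top hU0 hx
  set h : En n → ℝ := fun w => (1 / 2) * (inner ℝ w (B w) : ℝ) - (inner ℝ x w : ℝ) with hdef
  have hcont : Continuous h := by
    apply Continuous.sub
    · exact continuous_const.mul (continuous_id.inner (B.continuous.comp continuous_id))
    · exact continuous_const.inner continuous_id
  set K : Set (En n × ℝ) := {p | h p.1 < p.2} with hKdef
  set L : Set (En n × ℝ) := U ×ˢ Set.Iic (-M) with hLdef
  have hKopen : IsOpen K := isOpen_lt (hcont.comp continuous_fst) continuous_snd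
  have hKcv : Convex ℝ K := by
    rintro p hp q hq a b ha hb hab
    have hcomb : h (a • p.1 + b • q.1) ≤ a * h p.1 + b * h q.1 := by
      have hq' := q_convex hsymm hpsd p.1 q.1 ha hb hab
      simp only [hdef, inner_add_right, real_inner_smul_right]
      linarith
    have hstrict : a * h p.1 + b * h q.1 < a * p.2 + b * q.2 := strict_combo hp hq ha hb hab
    show h (a • p + b • q).1 < (a • p + b • q).2
    simp only [Prod.fst_add, Prod.snd_add, Prod.smul_fst, Prod.smul_snd, smul_eq_mul]
    calc h (a • p.1 + b • q.1) ≤ a * h p.1 + b * h q.1 := hcomb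
      _ < a * p.2 + b * q.2 := hstrict
  have hLcv : Convex ℝ L := hUcv.prod (convex_Iic _)
  have hdisj : Disjoint K L := by
    rw [Set.disjoint_left]
    rintro ⟨w, t⟩ hKmem ⟨hwU, ht⟩
    have h1 : h w < t := hKmem
    have h2 : t ≤ -M := ht
    have h3 := hM w hwU
    simp only [hdef] at h1
    linarith
  obtain ⟨f, u, hfK, hfL⟩ := geometric_hahn_banach_open hKcv hKopen hLcv hdisj
  set g : En n →L[ℝ] ℝ := f.comp (ContinuousLinearMap.inl ℝ (En n) ℝ) with hgdef
  set s : ℝ := f (0, 1) with hsdef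
  have hdecomp : ∀ (w : En n) (t : ℝ), f (w, t) = g w + t * s := by
    intro w t
    rw [prod_funct_decomp f w t]
    rfl
  have hzero : h 0 = 0 := by simp [hdef]
  have hg0 : g (0 : En n) = 0 := map_zero g
  have hKmem : ∀ (w : En n) (t : ℝ), h w < t → g w + t * s < u := by
    intro w t hwt
    have := hfK (w, t) hwt
    rwa [hdecomp] at this
  have hs_le : s ≤ 0 := by
    by_contra hpos
    push_neg at hpos
    set t : ℝ := max 1 ((u + 1) / s) with ht
    have h1 : h 0 < t := by rw [hzero]; exact lt_of_lt_of_le one_pos (le_max_left _ _)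
    have h2 := hKmem 0 t h1
    rw [hg0, zero_add] at h2
    have h3 : (u + 1) / s * s ≤ t * s :=
      mul_le_mul_of_nonneg_right (le_max_right _ _) hpos.le
    rw [div_mul_cancel₀ _ hpos.ne'] at h3
    linarith
  have hs_ne : s ≠ 0 := by
    intro h0
    have hgw : ∀ w, g w < u := by
      intro w
      have := hKmem w (h w + 1) (by linarith)
      rwa [h0, mul_zero, add_zero] at this
    have hu0 : 0 < u := by have := hgw 0; rwa [hg0] at this
    have hgz := funct_zero g u hu0 hgw
    have hl := hfL ((0 : En n), -M) ⟨hU0, Set.mem_Iic.2 le_rfl⟩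
    rw [hdecomp, hgz, h0, mul_zero, add_zero] at hl
    linarith
  have hsneg : s < 0 := lt_of_le_of_ne hs_le hs_ne
  obtain ⟨σ, hσpos, hsσ⟩ : ∃ σ : ℝ, 0 < σ ∧ s = -σ := ⟨-s, by linarith, by ring⟩
  have hkey : ∀ w, g w ≤ u + σ * h w := by
    intro w
    by_contra hlt
    push_neg at hlt
    have hdpos : 0 < g w - u - σ * h w := by linarith
    have hεpos : 0 < (g w - u - σ * h w) / (2 * σ) := div_pos hdpos (by linarith)
    have h1 := hKmem w (h w + (g w - u - σ * h w) / (2 * σ)) (by linarith)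
    rw [hsσ] at h1
    have h2 : (h w + (g w - u - σ * h w) / (2 * σ)) * -σ
        = -(σ * h w) - (g w - u - σ * h w) / 2 := by
      field_simp
      ring
    rw [h2] at h1
    simp only [hdef] at h1 hlt
    linarith
  set y : En n := (InnerProductSpace.toDual ℝ (En n)).symm g with hydef
  have hy : ∀ w, (inner ℝ y w : ℝ) = g w := fun w => InnerProductSpace.toDual_symm_apply
  set c : En n := x + σ⁻¹ • y with hcdef
  have hcbound : ∀ w : En n, (inner ℝ c w : ℝ) ≤ σ⁻¹ * u + (1 / 2) * (inner ℝ w (B w) : ℝ) := by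
    intro w
    have e1 : (inner ℝ c w : ℝ) = (inner ℝ x w : ℝ) + σ⁻¹ * g w := by
      rw [hcdef, inner_add_left, real_inner_smul_left, hy w]
    have e2 : σ⁻¹ * g w ≤ σ⁻¹ * (u + σ * h w) :=
      mul_le_mul_of_nonneg_left (hkey w) (inv_nonneg.2 hσpos.le)
    have e3 : σ⁻¹ * (u + σ * h w) = σ⁻¹ * u + h w := by
      field_simp
    simp only [hdef] at e2 e3
    rw [e1]
    linarith
  obtain ⟨z, hz⟩ := mem_range_of_quad_bound hsymm hcbound
  have hlow : ∀ w ∈ U, u ≤ g w + M * σ := by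
    intro w hw
    have := hfL (w, -M) ⟨hw, Set.mem_Iic.2 le_rfl⟩
    rw [hdecomp, hsσ] at this
    have e : (-M) * (-σ) = M * σ := by ring
    rwa [e] at this
  set v : En n := σ⁻¹ • (-y) with hvdef
  have hvb : ∀ w ∈ U, (inner ℝ v w : ℝ) ≤ σ⁻¹ * (M * σ - u) := by
    intro w hw
    have e1 : (inner ℝ v w : ℝ) = σ⁻¹ * (-(g w)) := by
      rw [hvdef, real_inner_smul_left, inner_neg_left, hy w]
    have e2 : -(g w) ≤ M * σ - u := by linarith [hlow w hw]
    rw [e1]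
    exact mul_le_mul_of_nonneg_left e2 (inv_nonneg.2 hσpos.le)
  have hv : v ∈ econeGen (epolarSet U) := mem_coneGen_polar_of_bdd hvb
  refine Set.mem_add.2 ⟨v, hv, B z, ⟨z, rfl⟩, ?_⟩
  rw [hz, hcdef, hvdef, smul_neg]
  abel

end part1
section part2
open Filter Metric Set Bornology
variable {n : ℕ} {U : Set (En n)} {B : En n →L[ℝ] En n}

lemma part2_eq (hUcv : Convex ℝ U) (hU0 : (0 : En n) ∈ U)
    (hpsd : ∀ x : En n, 0 ≤ (inner ℝ x (B x) : ℝ)) :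
    {y : En n | ehorizon (qsFn U B) y ≤ 0} = epolarCone (econeGen U) := by
  ext y
  simp only [Set.mem_setOf_eq]
  constructor
  · intro hy
    rintro x ⟨lam, hlam, u2, hu2, rfl⟩
    rw [real_inner_smul_right]
    have hyu : (inner ℝ y u2 : ℝ) ≤ 0 := by
      by_contra hpos
      push_neg at hpos
      have h0dom : qsFn U B 0 ≠ ⊤ := by
        rw [qsFn_zero hU0 hpsd]; exact EReal.zero_ne_top
      have hlow : qsFn U B (0 + y) - qsFn U B 0 ≤ ehorizon (qsFn U B) y :=
        le_iSup₂ (f := fun x (_ : x ∈ {x : En n | qsFn U B x ≠ ⊤}) =>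
          qsFn U B (x + y) - qsFn U B x) 0 h0dom
      rw [zero_add, qsFn_zero hU0 hpsd] at hlow
      have hsub : qsFn U B y - 0 = qsFn U B y := by
        rw [sub_eq_add_neg, neg_zero, add_zero]
      rw [hsub] at hlow
      have hQ : 0 ≤ (inner ℝ u2 (B u2) : ℝ) := hpsd u2
      set a : ℝ := (inner ℝ y u2 : ℝ) with ha
      set Q : ℝ := (inner ℝ u2 (B u2) : ℝ) with hQdef
      set t : ℝ := min 1 (a / (Q + 1)) with htdef
      have ht0 : 0 < t := lt_min one_pos (div_pos hpos (by linarith))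
      have ht1 : t ≤ 1 := min_le_left _ _
      have htu : t • u2 ∈ U := hUcv.smul_mem_of_zero_mem hU0 hu2 ⟨ht0.le, ht1⟩
      have h5 : t * Q ≤ a := by
        calc t * Q ≤ (a / (Q + 1)) * Q :=
              mul_le_mul_of_nonneg_right (min_le_right _ _) hQ
          _ ≤ a := by
              rw [div_mul_eq_mul_div, div_le_iff₀ (by linarith : (0:ℝ) < Q + 1)]
              nlinarith
      have hterm : t * a / 2 ≤ (inner ℝ y (t • u2) : ℝ)
          - (1 / 2) * (inner ℝ (t • u2) (B (t • u2)) : ℝ) := by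
        rw [real_inner_smul_right, map_smul, real_inner_smul_left, real_inner_smul_right]
        rw [← ha, ← hQdef]
        nlinarith [ht0, h5, hpos]
      have hg : ((t * a / 2 : ℝ) : EReal) ≤ qsFn U B y :=
        le_trans (EReal.coe_le_coe_iff.2 hterm) (le_qsFn htu)
      have hfin : (0 : EReal) < qsFn U B y := by
        refine lt_of_lt_of_le ?_ hg
        exact_mod_cast (by positivity : (0:ℝ) < t * a / 2)
      exact absurd (le_trans hlow hy) (not_le.2 hfin)
    exact mul_nonpos_of_nonneg_of_nonpos hlam hyu
  · intro hy
    have hyU : ∀ u ∈ U, (inner ℝ y u : ℝ) ≤ 0 := fun u hu =>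
      hy u ⟨1, zero_le_one, u, hu, (one_smul ℝ u).symm⟩
    apply iSup₂_le
    intro x hx
    have hxne : qsFn U B x ≠ ⊤ := hx
    have hxbot : qsFn U B x ≠ ⊥ :=
      ne_of_gt (lt_of_lt_of_le (by simp) (qsFn_nonneg hU0 x))
    have hle : qsFn U B (x + y) ≤ qsFn U B x := by
      apply iSup₂_le
      intro w hw
      refine le_trans ?_ (le_qsFn hw)
      apply EReal.coe_le_coe_iff.2
      rw [inner_add_left]
      have := hyU w hw
      linarith
    calc qsFn U B (x + y) - qsFn U B x ≤ qsFn U B x - qsFn U B x :=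
          EReal.sub_le_sub hle le_rfl
      _ = 0 := by
          rw [← EReal.coe_toReal hxne hxbot, ← EReal.coe_sub]
          norm_num

end part2
section part3
open Filter Metric Set Bornology
variable {n : ℕ} {U : Set (En n)} {B : En n →L[ℝ] En n}

lemma part1_superset (hU0 : (0 : En n) ∈ U)
    (hsymm : ∀ x y : En n, (inner ℝ (B x) y : ℝ) = (inner ℝ x (B y) : ℝ))
    (hpsd : ∀ x : En n, 0 ≤ (inner ℝ x (B x) : ℝ))
    {x : En n} (hx : x ∈ econeGen (epolarSet U) + Set.range B) : qsFn U B x ≠ ⊤ := by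
  rw [Set.mem_add] at hx
  obtain ⟨v, hv, bz, ⟨z, rfl⟩, rfl⟩ := hx
  obtain ⟨lam, hlam, p, hp, rfl⟩ := hv
  have hle : qsFn U B (lam • p + B z)
      ≤ ((lam + (1 / 2) * (inner ℝ z (B z) : ℝ) : ℝ) : EReal) := by
    apply qsFn_le
    intro w hw
    have h1 : (inner ℝ (lam • p + B z) w : ℝ)
        = lam * (inner ℝ p w : ℝ) + (inner ℝ z (B w) : ℝ) := by
      rw [inner_add_left, real_inner_smul_left, hsymm z w]
    have h2 : (inner ℝ p w : ℝ) ≤ 1 := hp w hw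
    have h3 := inner_B_cauchy hsymm hpsd z w
    have h4 : lam * (inner ℝ p w : ℝ) ≤ lam := by
      calc lam * (inner ℝ p w : ℝ) ≤ lam * 1 := mul_le_mul_of_nonneg_left h2 hlam
        _ = lam := mul_one lam
    rw [h1]
    linarith
  exact (lt_of_le_of_lt hle (EReal.coe_lt_top _)).ne

lemma part3_mpr (h0 : (0 : En n) ∈ interior U) :
    Filter.Tendsto (qsFn U B) (Bornology.cobounded (En n)) (nhds ⊤) := by
  rw [EReal.tendsto_nhds_top_iff_real]
  intro M
  obtain ⟨ε, hε, hball⟩ : ∃ ε > 0, ball (0 : En n) ε ⊆ U := by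
    rcases Metric.mem_nhds_iff.1 (mem_interior_iff_mem_nhds.1 h0) with ⟨ε, hε, hb⟩
    exact ⟨ε, hε, hb⟩
  set δ : ℝ := ε / 2 with hδdef
  have hδ : 0 < δ := by positivity
  set C : ℝ := (1 / 2) * δ ^ 2 * ‖B‖ + 1 with hCdef
  have hC : 0 < C := by positivity
  set R : ℝ := max 1 ((M + C) / δ) with hRdef
  have hmem : (closedBall (0 : En n) R)ᶜ ∈ cobounded (En n) :=
    (hasBasis_cobounded_compl_closedBall (0 : En n)).mem_of_mem trivial
  filter_upwards [hmem] with x hx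
  have hnorm : R < ‖x‖ := by
    simp only [Set.mem_compl_iff, mem_closedBall, dist_zero_right, not_le] at hx
    exact hx
  have hR1 : (1 : ℝ) ≤ R := le_max_left _ _
  have hxpos : 0 < ‖x‖ := by linarith
  set w : En n := (δ / ‖x‖) • x with hwdef
  have hwnorm : ‖w‖ = δ := by
    rw [hwdef, norm_smul, Real.norm_of_nonneg (by positivity), div_mul_cancel₀ _ hxpos.ne']
  have hwU : w ∈ U := hball (by rw [mem_ball, dist_zero_right, hwnorm]; linarith)
  have hinner : (inner ℝ x w : ℝ) = δ * ‖x‖ := by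
    rw [hwdef, real_inner_smul_right, real_inner_self_eq_norm_sq]
    field_simp
  have hq : (inner ℝ w (B w) : ℝ) ≤ δ ^ 2 * ‖B‖ := by
    calc (inner ℝ w (B w) : ℝ) ≤ ‖w‖ * ‖B w‖ := real_inner_le_norm w (B w)
      _ ≤ ‖w‖ * (‖B‖ * ‖w‖) :=
          mul_le_mul_of_nonneg_left (B.le_opNorm w) (norm_nonneg _)
      _ = δ ^ 2 * ‖B‖ := by rw [hwnorm]; ring
  have hterm : M < (inner ℝ x w : ℝ) - (1 / 2) * (inner ℝ w (B w) : ℝ) := by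
    have hRx : δ * R < δ * ‖x‖ := mul_lt_mul_of_pos_left hnorm hδ
    have hMC : M + C ≤ δ * R := by
      have h6 : (M + C) / δ ≤ R := le_max_right _ _
      calc M + C = δ * ((M + C) / δ) := by field_simp
        _ ≤ δ * R := mul_le_mul_of_nonneg_left h6 hδ.le
    rw [hinner]
    rw [hCdef] at hMC
    linarith
  exact lt_of_lt_of_le (EReal.coe_lt_coe_iff.2 hterm) (le_qsFn hwU)

lemma part3_mp (hUcv : Convex ℝ U) (hU0 : (0 : En n) ∈ U)
    (hpsd : ∀ x : En n, 0 ≤ (inner ℝ x (B x) : ℝ))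
    (hT : Filter.Tendsto (qsFn U B) (Bornology.cobounded (En n)) (nhds ⊤)) :
    (0 : En n) ∈ interior U := by
  by_contra h0
  obtain ⟨y, hyne, hy⟩ : ∃ y : En n, y ≠ 0 ∧ ∀ w ∈ U, (inner ℝ y w : ℝ) ≤ 0 := by
    by_cases hint : (interior U).Nonempty
    · obtain ⟨f, u, hfK, hfU0⟩ := geometric_hahn_banach_open hUcv.interior isOpen_interior
        (convex_singleton (0 : En n)) (Set.disjoint_singleton_right.2 h0)
      have hu0 : u ≤ 0 := by
        have := hfU0 0 rfl
        rwa [map_zero] at this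
      obtain ⟨z, hz⟩ := hint
      have hfz : f z < u := hfK z hz
      have hfU : ∀ w ∈ U, f w ≤ u := by
        intro w hw
        by_contra hgt
        push_neg at hgt
        have hDpos : 0 < f w - f z := by linarith
        have ht0 : 0 < (f w - u) / (2 * (f w - f z)) := div_pos (by linarith) (by linarith)
        have ht1 : (f w - u) / (2 * (f w - f z)) < 1 := by
          rw [div_lt_one (by linarith)]
          linarith
        have hcombo := hUcv.combo_self_interior_mem_interior hw hz
          (a := 1 - (f w - u) / (2 * (f w - f z)))
          (b := (f w - u) / (2 * (f w - f z))) (by linarith) ht0 (by ring)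
        have hlt := hfK _ hcombo
        rw [map_add, map_smul, map_smul, smul_eq_mul, smul_eq_mul] at hlt
        have htD : (f w - u) / (2 * (f w - f z)) * (f w - f z) = (f w - u) / 2 := by
          field_simp
        nlinarith [hlt, htD]
      set y : En n := (InnerProductSpace.toDual ℝ (En n)).symm f with hydef
      have hyr : ∀ w : En n, (inner ℝ y w : ℝ) = f w :=
        fun w => InnerProductSpace.toDual_symm_apply
      refine ⟨y, ?_, fun w hw => by rw [hyr]; linarith [hfU w hw]⟩
      intro hy0
      have : f z = 0 := by rw [← hyr, hy0, inner_zero_left]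
      linarith
    · have hvs : Submodule.span ℝ U ≤ vectorSpan ℝ U := by
        rw [vectorSpan_def]
        exact Submodule.span_mono fun u hu => ⟨u, hu, 0, hU0, by simp [vsub_eq_sub]⟩
      have hspan : Submodule.span ℝ U ≠ ⊤ := by
        intro htop
        have hvtop : vectorSpan ℝ U = ⊤ := top_le_iff.1 (htop ▸ hvs)
        have haff : affineSpan ℝ U = ⊤ :=
          (AffineSubspace.affineSpan_eq_top_iff_vectorSpan_eq_top_of_nonempty ℝ (En n) (En n)
            ⟨0, hU0⟩).2 hvtop
        exact hint (hUcv.interior_nonempty_iff_affineSpan_eq_top.2 haff)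
      have hne : (Submodule.span ℝ U)ᗮ ≠ ⊥ := by
        intro hbot
        exact hspan (Submodule.orthogonal_eq_bot_iff.1 hbot)
      obtain ⟨y, hymem, hyne⟩ := (Submodule.ne_bot_iff _).1 hne
      refine ⟨y, hyne, fun w hw => ?_⟩
      have := hymem _ (Submodule.subset_span hw)
      rw [real_inner_comm] at this
      rw [this]
  have hmem : qsFn U B ⁻¹' (Set.Ioi (0 : EReal)) ∈ cobounded (En n) :=
    hT (isOpen_Ioi.mem_nhds EReal.zero_lt_top)
  have hbdd : IsBounded ((qsFn U B ⁻¹' (Set.Ioi (0 : EReal)))ᶜ) :=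
    Bornology.isBounded_def.2 (by rwa [compl_compl])
  obtain ⟨r, hr⟩ := isBounded_iff_forall_norm_le.1 hbdd
  have hty : ∀ t : ℝ, 0 ≤ t → qsFn U B (t • y) ≤ 0 := by
    intro t ht
    have h1 : qsFn U B (t • y) ≤ ((0 : ℝ) : EReal) := qsFn_le fun w hw => by
      rw [real_inner_smul_left]
      have h2 := hy w hw
      have h3 := hpsd w
      nlinarith
    simpa using h1
  have hnorm : ∀ t : ℝ, 0 ≤ t → t * ‖y‖ ≤ r := by
    intro t ht
    have hm : t • y ∈ (qsFn U B ⁻¹' (Set.Ioi (0 : EReal)))ᶜ := by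
      simp only [Set.mem_compl_iff, Set.mem_preimage, Set.mem_Ioi, not_lt]
      exact hty t ht
    have := hr _ hm
    rwa [norm_smul, Real.norm_of_nonneg ht] at this
  have hypos : 0 < ‖y‖ := norm_pos_iff.2 hyne
  have hcontr := hnorm ((|r| + 1) / ‖y‖) (by positivity)
  rw [div_mul_cancel₀ _ hypos.ne'] at hcontr
  linarith [le_abs_self r]

end part3

/-- `dom φ = cone(U°) + Ran B`, `hzn(φ) = (cone U)°`, and `φ` is
coercive iff `0 ∈ int U`. -/
theorem stmt15 {n : ℕ} (U : Set (En n))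
    (hUne : U.Nonempty) (hUcl : IsClosed U) (hUcv : Convex ℝ U) (hU0 : (0 : En n) ∈ U)
    (B : En n →L[ℝ] En n)
    (hsymm : ∀ x y : En n, (inner ℝ (B x) y : ℝ) = (inner ℝ x (B y) : ℝ))
    (hpsd : ∀ x : En n, 0 ≤ (inner ℝ x (B x) : ℝ)) :
    {x : En n | qsFn U B x ≠ ⊤} = econeGen (epolarSet U) + Set.range B ∧
    {y : En n | ehorizon (qsFn U B) y ≤ 0} = epolarCone (econeGen U) ∧
    (Filter.Tendsto (qsFn U B) (Bornology.cobounded (En n)) (nhds ⊤) ↔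
      (0 : En n) ∈ interior U) := by
  refine ⟨?_, part2_eq hUcv hU0 hpsd,
    ⟨fun hT => part3_mp hUcv hU0 hpsd hT, fun h0 => part3_mpr h0⟩⟩
  ext x
  exact ⟨fun hx => part1_subset hUcv hU0 hsymm hpsd hx,
    fun hx => part1_superset hU0 hsymm hpsd hx⟩
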